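/- For K ∈ (1,2) and s,t > 0: ∫₀^∞ (1-e^(-rt))(1-e^(-rs)) r^(-(1+K)) dr = (Γ(2-K)/(K(K-1)))·((t+s)^K - t^K - s^K). -/

import Mathlib

open Real MeasureTheory Set

namespace Stmt13Aux

lemma one_sub_exp_le (x : ℝ) : 1 - Real.exp (-x) ≤ x := by
  nlinarith [Real.add_one_le_exp (-x)]

lemma one_sub_exp_nonneg {x : ℝ} (hx : 0 ≤ x) : 0 ≤ 1 - Real.exp (-x) := by
  have := Real.exp_le_one_iff.2 (neg_nonpos.2 hx); linarith

lemma mono_aux {f g : ℝ → ℝ} {S : Set ℝ} (hS : MeasurableSet S)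
    (hg : IntegrableOn g S) (hfc : ContinuousOn f S)
    (hbound : ∀ x ∈ S, ‖f x‖ ≤ ‖g x‖) : IntegrableOn f S :=
  Integrable.mono hg (hfc.aestronglyMeasurable hS)
    ((ae_restrict_iff' hS).2 (Filter.Eventually.of_forall hbound))

lemma int_exp_rpow {b c : ℝ} (hb : -1 < b) (hc : 0 < c) :
    IntegrableOn (fun r : ℝ => r ^ b * Real.exp (-(c * r))) (Ioi 0) := by
  have h := integrableOn_rpow_mul_exp_neg_mul_rpow (p := 1) hb zero_lt_one hc
  refine h.congr_fun (fun x hx => ?_) measurableSet_Ioi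
  simp only [Real.rpow_one, neg_mul]

lemma gamma_int {p c : ℝ} (hp : 0 < p) (hc : 0 < c) :
    ∫ r in Ioi (0:ℝ), r ^ (p - 1) * Real.exp (-(c * r)) = Real.Gamma p * c ^ (-p) := by
  rw [Real.integral_rpow_mul_exp_neg_mul_Ioi hp hc, one_div, Real.inv_rpow hc.le,
    ← Real.rpow_neg hc.le]
  ring

lemma exp_int {r : ℝ} (hr : 0 < r) {a : ℝ} (ha : 0 < a) :
    ∫ u in Ioo (0:ℝ) a, Real.exp (-(r * u)) = (1 - Real.exp (-(r * a))) / r := by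
  rw [← integral_Ioc_eq_integral_Ioo, ← intervalIntegral.integral_of_le ha.le]
  have h : ∀ u : ℝ, Real.exp (-(r * u)) = Real.exp ((-r) * u) := by
    intro u; congr 1; ring
  simp_rw [h]
  rw [intervalIntegral.integral_comp_mul_left (fun x => Real.exp x) (neg_ne_zero.2 hr.ne')]
  rw [integral_exp, mul_zero, Real.exp_zero, smul_eq_mul]
  have : (-r) * a = -(r * a) := by ring
  rw [this]
  field_simp
  ring

lemma cont_rpow {c : ℝ} : ContinuousOn (fun r : ℝ => r ^ c) (Ioi 0) :=
  continuousOn_id.rpow_const (fun x hx => Or.inl (ne_of_gt hx))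

lemma cont_exp_lin (a : ℝ) : Continuous (fun r : ℝ => Real.exp (-(r * a))) :=
  Real.continuous_exp.comp ((continuous_id.mul continuous_const).neg)

lemma f_int {K a b : ℝ} (hK1 : 1 < K) (hK2 : K < 2) (ha : 0 < a) (hb : 0 < b) :
    IntegrableOn
      (fun r : ℝ => (1 - Real.exp (-(r * a))) * (1 - Real.exp (-(r * b))) * r ^ (-(1 + K)))
      (Ioi 0) := by
  have hcont : ContinuousOn
      (fun r : ℝ => (1 - Real.exp (-(r * a))) * (1 - Real.exp (-(r * b))) * r ^ (-(1 + K)))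
      (Ioi 0) :=
    (((continuous_const.sub (cont_exp_lin a)).mul
      (continuous_const.sub (cont_exp_lin b))).continuousOn).mul cont_rpow
  rw [← Ioc_union_Ioi_eq_Ioi (zero_le_one : (0:ℝ) ≤ 1)]
  refine IntegrableOn.union ?_ ?_
  · -- on Ioc 0 1, bound by a*b* r^(1-K)
    refine mono_aux measurableSet_Ioc
      (((intervalIntegral.intervalIntegrable_rpow' (show (-1:ℝ) < 1 - K by linarith)).1).const_mul
        (a * b))
      (hcont.mono Ioc_subset_Ioi_self) ?_
    intro x hx
    have hx0 : 0 < x := hx.1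
    have h1 : (0:ℝ) ≤ 1 - Real.exp (-(x * a)) := one_sub_exp_nonneg (by positivity)
    have h2 : (0:ℝ) ≤ 1 - Real.exp (-(x * b)) := one_sub_exp_nonneg (by positivity)
    have h3 : (0:ℝ) ≤ x ^ (-(1 + K)) := Real.rpow_nonneg hx0.le _
    have h4 : (0:ℝ) ≤ x ^ (1 - K) := Real.rpow_nonneg hx0.le _
    rw [Real.norm_eq_abs, Real.norm_eq_abs, abs_of_nonneg (by positivity),
      abs_of_nonneg (by positivity)]
    have e1 : x * a * (x * b) * x ^ (-(1 + K)) = a * b * x ^ (1 - K) := by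
      have : x ^ (1 - K) = x * x * x ^ (-(1 + K)) := by
        rw [show (1:ℝ) - K = 1 + 1 + -(1 + K) by ring, Real.rpow_add hx0, Real.rpow_add hx0,
          Real.rpow_one]
      rw [this]; ring
    calc (1 - Real.exp (-(x * a))) * (1 - Real.exp (-(x * b))) * x ^ (-(1 + K))
        ≤ x * a * (x * b) * x ^ (-(1 + K)) := by
          have l1 := one_sub_exp_le (x * a)
          have l2 := one_sub_exp_le (x * b)
          have : (1 - Real.exp (-(x * a))) * (1 - Real.exp (-(x * b))) ≤ x * a * (x * b) :=
            mul_le_mul l1 l2 h2 (by positivity)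
          exact mul_le_mul_of_nonneg_right this h3
      _ = a * b * x ^ (1 - K) := e1
  · -- on Ioi 1, bound by r^(-(1+K))
    refine mono_aux measurableSet_Ioi
      (integrableOn_Ioi_rpow_of_lt (show -(1 + K) < -1 by linarith) one_pos)
      (hcont.mono (Ioi_subset_Ioi zero_le_one)) ?_
    intro x hx
    have hx0 : (0:ℝ) < x := lt_trans one_pos hx
    have h1 : (0:ℝ) ≤ 1 - Real.exp (-(x * a)) := one_sub_exp_nonneg (by positivity)
    have h2 : (0:ℝ) ≤ 1 - Real.exp (-(x * b)) := one_sub_exp_nonneg (by positivity)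
    have h3 : (0:ℝ) ≤ x ^ (-(1 + K)) := Real.rpow_nonneg hx0.le _
    rw [Real.norm_eq_abs, Real.norm_eq_abs, abs_of_nonneg (by positivity),
      abs_of_nonneg h3]
    have l1 : 1 - Real.exp (-(x * a)) ≤ 1 := by
      have := Real.exp_pos (-(x * a)); linarith
    have l2 : 1 - Real.exp (-(x * b)) ≤ 1 := by
      have := Real.exp_pos (-(x * b)); linarith
    calc (1 - Real.exp (-(x * a))) * (1 - Real.exp (-(x * b))) * x ^ (-(1 + K))
        ≤ 1 * 1 * x ^ (-(1 + K)) :=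
          mul_le_mul_of_nonneg_right (mul_le_mul l1 l2 h2 zero_le_one) h3
      _ = x ^ (-(1 + K)) := by ring

lemma g_int {K b u : ℝ} (hK1 : 1 < K) (hK2 : K < 2) (hb : 0 < b) (hu : 0 < u) :
    IntegrableOn
      (fun r : ℝ => (1 - Real.exp (-(r * b))) * r ^ (-K) * Real.exp (-(r * u))) (Ioi 0) := by
  refine mono_aux measurableSet_Ioi
    ((int_exp_rpow (show (-1:ℝ) < 1 - K by linarith) hu).const_mul b)
    (((continuous_const.sub (cont_exp_lin b)).continuousOn.mul cont_rpow).mul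
      (cont_exp_lin u).continuousOn) ?_
  intro x hx
  have hx0 : (0:ℝ) < x := hx
  have h1 : (0:ℝ) ≤ 1 - Real.exp (-(x * b)) := one_sub_exp_nonneg (by positivity)
  have h2 : (0:ℝ) ≤ x ^ (-K) := Real.rpow_nonneg hx0.le _
  rw [Real.norm_eq_abs, Real.norm_eq_abs, abs_of_nonneg (by positivity),
    abs_of_nonneg (by positivity)]
  have e1 : x * b * x ^ (-K) * Real.exp (-(x * u))
      = b * (x ^ (1 - K) * Real.exp (-(u * x))) := by
    have : x ^ (1 - K) = x * x ^ (-K) := by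
      rw [show (1:ℝ) - K = 1 + -K by ring, Real.rpow_add hx0, Real.rpow_one]
    rw [this, mul_comm u x]; ring
  calc (1 - Real.exp (-(x * b))) * x ^ (-K) * Real.exp (-(x * u))
      ≤ x * b * x ^ (-K) * Real.exp (-(x * u)) := by
        have := one_sub_exp_le (x * b)
        have hxe : (0:ℝ) < Real.exp (-(x * u)) := Real.exp_pos _
        exact mul_le_mul_of_nonneg_right (mul_le_mul_of_nonneg_right this h2) hxe.le
    _ = b * (x ^ (1 - K) * Real.exp (-(u * x))) := e1

lemma inner_eq {K b u : ℝ} (hK1 : 1 < K) (hK2 : K < 2) (hb : 0 < b) (hu : 0 < u) :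
    ∫ r in Ioi (0:ℝ), (1 - Real.exp (-(r * b))) * r ^ (-K) * Real.exp (-(r * u))
      = Real.Gamma (2 - K) / (K - 1) * ((u + b) ^ (K - 1) - u ^ (K - 1)) := by
  have hstep : ∀ r ∈ Ioi (0:ℝ),
      (1 - Real.exp (-(r * b))) * r ^ (-K) * Real.exp (-(r * u))
        = ∫ v in Ioo (0:ℝ) b, r ^ (1 - K) * Real.exp (-(r * (u + v))) := by
    intro r hr
    have hr0 : (0:ℝ) < r := hr
    have hsplit : ∀ v : ℝ, r ^ (1 - K) * Real.exp (-(r * (u + v)))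
        = r ^ (1 - K) * Real.exp (-(r * u)) * Real.exp (-(r * v)) := by
      intro v
      rw [mul_assoc, ← Real.exp_add]
      congr 2
      ring
    simp_rw [hsplit]
    rw [MeasureTheory.integral_const_mul, exp_int hr0 hb]
    have hrk : r ^ (1 - K) = r * r ^ (-K) := by
      rw [show (1:ℝ) - K = 1 + -K by ring, Real.rpow_add hr0, Real.rpow_one]
    rw [hrk]
    field_simp
  rw [setIntegral_congr_fun measurableSet_Ioi hstep]
  have hcont : ContinuousOn
      (fun p : ℝ × ℝ => p.1 ^ (1 - K) * Real.exp (-(p.1 * (u + p.2))))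
      (Ioi 0 ×ˢ Ioo 0 b) := by
    have h1 : ContinuousOn (fun p : ℝ × ℝ => p.1 ^ (1 - K)) (Ioi 0 ×ˢ Ioo 0 b) :=
      continuous_fst.continuousOn.rpow_const (fun p hp => Or.inl (ne_of_gt hp.1))
    have h2 : Continuous fun p : ℝ × ℝ => Real.exp (-(p.1 * (u + p.2))) :=
      Real.continuous_exp.comp ((continuous_fst.mul (continuous_const.add continuous_snd)).neg)
    exact h1.mul h2.continuousOn
  have hmeas : AEStronglyMeasurable
      (Function.uncurry fun r v : ℝ => r ^ (1 - K) * Real.exp (-(r * (u + v))))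
      ((volume.restrict (Ioi 0)).prod (volume.restrict (Ioo (0:ℝ) b))) := by
    rw [Measure.prod_restrict]
    exact hcont.aestronglyMeasurable (measurableSet_Ioi.prod measurableSet_Ioo)
  have hint : Integrable
      (Function.uncurry fun r v : ℝ => r ^ (1 - K) * Real.exp (-(r * (u + v))))
      ((volume.restrict (Ioi 0)).prod (volume.restrict (Ioo (0:ℝ) b))) := by
    rw [MeasureTheory.integrable_prod_iff hmeas]
    constructor
    · refine Filter.Eventually.of_forall (fun r => ?_)
      refine ((Continuous.integrableOn_Ioc ?_).mono_set Ioo_subset_Ioc_self)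
      show Continuous fun v : ℝ => r ^ (1 - K) * Real.exp (-(r * (u + v)))
      fun_prop
    · refine (g_int hK1 hK2 hb hu).congr ?_
      refine (ae_restrict_iff' measurableSet_Ioi).2
        (Filter.Eventually.of_forall fun r hr => ?_)
      have hr0 : (0:ℝ) < r := hr
      have hnn : ∀ v ∈ Ioo (0:ℝ) b,
          r ^ (1 - K) * Real.exp (-(r * (u + v)))
            = ‖Function.uncurry (fun r v : ℝ => r ^ (1 - K) * Real.exp (-(r * (u + v)))) (r, v)‖ := by
        intro v hv
        rw [Function.uncurry]
        exact (norm_of_nonneg (by positivity)).symm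
      exact (hstep r hr).trans (setIntegral_congr_fun measurableSet_Ioo hnn)
  rw [MeasureTheory.integral_integral_swap hint]
  have hin : ∀ v ∈ Ioo (0:ℝ) b,
      (∫ r in Ioi (0:ℝ), r ^ (1 - K) * Real.exp (-(r * (u + v))))
        = Real.Gamma (2 - K) * (u + v) ^ (K - 2) := by
    intro v hv
    have huv : (0:ℝ) < u + v := by have := hv.1; linarith
    have hee : ∀ r : ℝ, r ^ (1 - K) * Real.exp (-(r * (u + v)))
        = r ^ ((2 - K) - 1) * Real.exp (-((u + v) * r)) := by
      intro r
      rw [mul_comm r (u + v), show (2:ℝ) - K - 1 = 1 - K by ring]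
    simp_rw [hee]
    rw [gamma_int (by linarith) huv, show -(2 - K) = K - 2 by ring]
  rw [setIntegral_congr_fun measurableSet_Ioo hin, MeasureTheory.integral_const_mul,
    ← integral_Ioc_eq_integral_Ioo, ← intervalIntegral.integral_of_le hb.le]
  have hca := intervalIntegral.integral_comp_add_left (a := 0) (b := b)
    (fun x : ℝ => x ^ (K - 2)) u
  simp only [add_zero] at hca
  rw [hca, integral_rpow (Or.inl (by linarith)), show K - 2 + 1 = K - 1 by ring]
  ring

end Stmt13Aux

theorem stmt_13 (K : ℝ) (hK : K ∈ Set.Ioo (1:ℝ) 2) (s t : ℝ) (hs : 0 < s) (ht : 0 < t) :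
    ∫ r in Set.Ioi (0:ℝ),
        (1 - Real.exp (-(r * t))) * (1 - Real.exp (-(r * s))) * r ^ (-(1 + K))
      = (Real.Gamma (2 - K) / (K * (K - 1))) * ((t + s) ^ K - t ^ K - s ^ K) := by
  obtain ⟨hK1, hK2⟩ := hK
  have hstep : ∀ r ∈ Set.Ioi (0:ℝ),
      (1 - Real.exp (-(r * t))) * (1 - Real.exp (-(r * s))) * r ^ (-(1 + K))
        = ∫ u in Ioo (0:ℝ) t,
            (1 - Real.exp (-(r * s))) * r ^ (-K) * Real.exp (-(r * u)) := by
    intro r hr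
    have hr0 : (0:ℝ) < r := hr
    rw [MeasureTheory.integral_const_mul, Stmt13Aux.exp_int hr0 ht]
    have h : r ^ (-(1 + K)) = r ^ (-K) / r := by
      rw [eq_div_iff hr0.ne', ← Real.rpow_add_one hr0.ne']
      congr 1
      ring
    rw [h]
    ring
  rw [setIntegral_congr_fun measurableSet_Ioi hstep]
  have hcont : ContinuousOn
      (fun p : ℝ × ℝ => (1 - Real.exp (-(p.1 * s))) * p.1 ^ (-K) * Real.exp (-(p.1 * p.2)))
      (Ioi 0 ×ˢ Ioo 0 t) := by
    have h1 : ContinuousOn (fun p : ℝ × ℝ => p.1 ^ (-K)) (Ioi 0 ×ˢ Ioo 0 t) :=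
      continuous_fst.continuousOn.rpow_const (fun p hp => Or.inl (ne_of_gt hp.1))
    have h2 : Continuous fun p : ℝ × ℝ => Real.exp (-(p.1 * s)) :=
      Real.continuous_exp.comp ((continuous_fst.mul continuous_const).neg)
    have h3 : Continuous fun p : ℝ × ℝ => Real.exp (-(p.1 * p.2)) :=
      Real.continuous_exp.comp ((continuous_fst.mul continuous_snd).neg)
    exact (((continuous_const.sub h2).continuousOn).mul h1).mul h3.continuousOn
  have hmeas : AEStronglyMeasurable
      (Function.uncurry fun r u : ℝ =>
        (1 - Real.exp (-(r * s))) * r ^ (-K) * Real.exp (-(r * u)))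
      ((volume.restrict (Ioi 0)).prod (volume.restrict (Ioo (0:ℝ) t))) := by
    rw [Measure.prod_restrict]
    exact hcont.aestronglyMeasurable (measurableSet_Ioi.prod measurableSet_Ioo)
  have hint : Integrable
      (Function.uncurry fun r u : ℝ =>
        (1 - Real.exp (-(r * s))) * r ^ (-K) * Real.exp (-(r * u)))
      ((volume.restrict (Ioi 0)).prod (volume.restrict (Ioo (0:ℝ) t))) := by
    rw [MeasureTheory.integrable_prod_iff hmeas]
    constructor
    · refine Filter.Eventually.of_forall (fun r => ?_)
      refine ((Continuous.integrableOn_Ioc ?_).mono_set Ioo_subset_Ioc_self)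
      show Continuous fun u : ℝ => (1 - Real.exp (-(r * s))) * r ^ (-K) * Real.exp (-(r * u))
      fun_prop
    · refine (Stmt13Aux.f_int hK1 hK2 ht hs).congr ?_
      refine (ae_restrict_iff' measurableSet_Ioi).2
        (Filter.Eventually.of_forall fun r hr => ?_)
      have hr0 : (0:ℝ) < r := hr
      have hnn : ∀ u ∈ Ioo (0:ℝ) t,
          (1 - Real.exp (-(r * s))) * r ^ (-K) * Real.exp (-(r * u))
            = ‖Function.uncurry (fun r u : ℝ =>
                (1 - Real.exp (-(r * s))) * r ^ (-K) * Real.exp (-(r * u))) (r, u)‖ := by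
        intro u hu
        rw [Function.uncurry]
        refine (norm_of_nonneg ?_).symm
        have h1 : (0:ℝ) ≤ 1 - Real.exp (-(r * s)) :=
          Stmt13Aux.one_sub_exp_nonneg (by positivity)
        have h2 : (0:ℝ) ≤ r ^ (-K) := Real.rpow_nonneg hr0.le _
        positivity
      exact (hstep r hr).trans (setIntegral_congr_fun measurableSet_Ioo hnn)
  rw [MeasureTheory.integral_integral_swap hint]
  have hin : ∀ u ∈ Ioo (0:ℝ) t,
      (∫ r in Ioi (0:ℝ), (1 - Real.exp (-(r * s))) * r ^ (-K) * Real.exp (-(r * u)))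
        = Real.Gamma (2 - K) / (K - 1) * ((u + s) ^ (K - 1) - u ^ (K - 1)) :=
    fun u hu => Stmt13Aux.inner_eq hK1 hK2 hs hu.1
  rw [setIntegral_congr_fun measurableSet_Ioo hin, MeasureTheory.integral_const_mul,
    ← integral_Ioc_eq_integral_Ioo, ← intervalIntegral.integral_of_le ht.le]
  have hi1 : IntervalIntegrable (fun u : ℝ => (u + s) ^ (K - 1)) volume 0 t := by
    refine Continuous.intervalIntegrable ?_ 0 t
    exact (continuous_id.add continuous_const).rpow_const (fun x => Or.inr (by linarith))
  have hi2 : IntervalIntegrable (fun u : ℝ => u ^ (K - 1)) volume 0 t :=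
    intervalIntegral.intervalIntegrable_rpow' (by linarith)
  rw [intervalIntegral.integral_sub hi1 hi2]
  have hca := intervalIntegral.integral_comp_add_right (a := 0) (b := t)
    (fun x : ℝ => x ^ (K - 1)) s
  simp only [zero_add] at hca
  rw [hca, integral_rpow (Or.inl (by linarith)), integral_rpow (Or.inl (by linarith)),
    show K - 1 + 1 = K by ring, Real.zero_rpow (by linarith : K ≠ 0)]
  have hKne : K ≠ 0 := by linarith
  have hK1ne : K - 1 ≠ 0 := by linarith
  field_simp
  ring
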